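/- arXiv:2409.00351 — 2 statements merged into one kernel-verified Lean document; each statement's English description precedes it below -/
import Mathlib

section
/- Let R be a commutative ring and let q ∈ R be such that q and q² are both roots of unity of order N. Then for every i, j ∈ {1,2,3}, the element X_ij^N is central in O_q(SL_3), i.e., X_ij^N commutes with every element of O_q(SL_3). -/
noncomputable section

namespace QSL3

/-- Number of inversions of a permutation of `Fin 3`. -/
def len (σ : Equiv.Perm (Fin 3)) : ℕ :=
  (Finset.univ.filter fun p : Fin 3 × Fin 3 => p.1 < p.2 ∧ σ p.2 < σ p.1).card

variable (R : Type) [CommRing R] (q : Rˣ)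

/-- The generator `X i j` of the free algebra. -/
def gen (i j : Fin 3) : FreeAlgebra R (Fin 3 × Fin 3) := FreeAlgebra.ι R (i, j)

/-- The defining relations of the quantum group `O_q(SL_3)`. -/
inductive Rel : FreeAlgebra R (Fin 3 × Fin 3) → FreeAlgebra R (Fin 3 × Fin 3) → Prop
  | q_comm (i j l m : Fin 3) (h : (l < i ∧ j = m) ∨ (i = l ∧ m < j)) :
      Rel (gen R i j * gen R l m) (((q⁻¹ : Rˣ) : R) • (gen R l m * gen R i j))
  | comm (i j l m : Fin 3) (h : i < l ∧ m < j) :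
      Rel (gen R i j * gen R l m) (gen R l m * gen R i j)
  | exch (i j l m : Fin 3) (h : l < i ∧ m < j) :
      Rel (gen R i j * gen R l m)
        (gen R l m * gen R i j - ((q : R) - ((q⁻¹ : Rˣ) : R)) • (gen R i m * gen R l j))
  | det : Rel (∑ σ : Equiv.Perm (Fin 3),
      (-(q : R)) ^ len σ • (gen R (σ 0) 0 * gen R (σ 1) 1 * gen R (σ 2) 2)) 1

/-- The quantum group `O_q(SL_3)`. -/
def Oq := RingQuot (Rel R q)

instance : Ring (Oq R q) := inferInstanceAs (Ring (RingQuot (Rel R q)))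
instance : Algebra R (Oq R q) := inferInstanceAs (Algebra R (RingQuot (Rel R q)))

/-- The generator `X i j` of `O_q(SL_3)`. -/
def X (i j : Fin 3) : Oq R q := RingQuot.mkAlgHom R (Rel R q) (gen R i j)

/-- `σ1`, the trace of the matrix of generators. -/
def s1 : Oq R q := X R q 0 0 + X R q 1 1 + X R q 2 2

/-- `σ2`, the sum of the principal 2×2 quantum minors. -/
def s2 : Oq R q :=
  (X R q 0 0 * X R q 1 1 - (q : R) • (X R q 0 1 * X R q 1 0))
  + (X R q 0 0 * X R q 2 2 - (q : R) • (X R q 0 2 * X R q 2 0))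
  + (X R q 1 1 * X R q 2 2 - (q : R) • (X R q 1 2 * X R q 2 1))

/-- `q` is a root of unity of order `N`. -/
def IsRootOfOrder (x : R) (N : ℕ) : Prop :=
  x ^ N = 1 ∧ ∀ k : ℕ, 0 < k → k < N → x ^ k ≠ 1

end QSL3

/-- The power sum polynomials `P^(N)`. -/
def powerSum : ℕ → MvPolynomial (Fin 2) ℤ
  | 0 => 3
  | 1 => MvPolynomial.X 0
  | 2 => MvPolynomial.X 0 ^ 2 - 2 * MvPolynomial.X 1
  | (n+3) => MvPolynomial.X 0 * powerSum (n+2) - MvPolynomial.X 1 * powerSum (n+1) + powerSum n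

/-- Evaluation of a polynomial in two (commuting) variables at a pair of elements of a
possibly noncommutative ring, sending the monomial `x^a * y^b` to `u^a * v^b`. -/
def evalP {A : Type*} [Ring A] (p : MvPolynomial (Fin 2) ℤ) (u v : A) : A :=
  (AddMonoidAlgebra.coeff p).sum fun m c => c • (u ^ m 0 * v ^ m 1)



section AuxCentral

variable {R : Type} [CommRing R] {A : Type*} [Ring A] [Algebra R A]

theorem pow_qcomm (u v : A) (μ : R) (h : u * v = μ • (v * u)) (n : ℕ) :
    u ^ n * v = μ ^ n • (v * u ^ n) := by
  induction n with
  | zero => simp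
  | succ n ih =>
    rw [pow_succ, mul_assoc, h, mul_smul_comm, ← mul_assoc, ih, smul_mul_assoc,
      smul_smul, mul_assoc, ← pow_succ, ← pow_succ']

theorem pow_exch (u v w : A) (lam μ : R) (h1 : u * v = v * u + lam • w)
    (h2 : u * w = μ • (w * u)) (n : ℕ) :
    u ^ (n + 1) * v = v * u ^ (n + 1)
      + (lam * ∑ k ∈ Finset.range (n + 1), μ ^ k) • (w * u ^ n) := by
  induction n with
  | zero => simpa using h1
  | succ n ih =>
    have : u ^ (n + 2) * v = u * (u ^ (n + 1) * v) := by
      rw [← mul_assoc, ← pow_succ']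
    rw [this, ih, mul_add, ← mul_assoc, h1, mul_smul_comm, ← mul_assoc, h2,
      smul_mul_assoc, smul_smul, add_mul, smul_mul_assoc,
      mul_assoc v, ← pow_succ', mul_assoc w, ← pow_succ',
      add_assoc, ← add_smul, geom_sum_succ (n := n + 1)]
    congr 2
    ring

/-- If `μ^N = 1` and `u` `μ`-commutes with `v`, then `u^N` commutes with `v`. -/
theorem pow_qcomm_eq (u v : A) (μ : R) {N : ℕ} (hμ : μ ^ N = 1)
    (h : u * v = μ • (v * u)) : u ^ N * v = v * u ^ N := by
  rw [pow_qcomm u v μ h N, hμ, one_smul]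

/-- Exchange-type commutation for the `N`-th power when the geometric sum kills `lam`. -/
theorem pow_exch_eq (u v w : A) (lam μ : R) {N : ℕ}
    (hc : lam * ∑ k ∈ Finset.range N, μ ^ k = 0)
    (h1 : u * v = v * u + lam • w) (h2 : u * w = μ • (w * u)) :
    u ^ N * v = v * u ^ N := by
  cases N with
  | zero => simp
  | succ n => rw [pow_exch u v w lam μ h1 h2 n, hc, zero_smul, add_zero]

end AuxCentral

section AuxRel

variable (R : Type) [CommRing R] (q : Rˣ)

theorem X_q_comm (i j l m : Fin 3) (h : (l < i ∧ j = m) ∨ (i = l ∧ m < j)) :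
    QSL3.X R q i j * QSL3.X R q l m
      = ((q⁻¹ : Rˣ) : R) • (QSL3.X R q l m * QSL3.X R q i j) := by
  have := RingQuot.mkAlgHom_rel R (QSL3.Rel.q_comm (R := R) (q := q) i j l m h)
  simp only [map_mul, map_smul, QSL3.X] at this ⊢; exact this

theorem X_comm (i j l m : Fin 3) (h : i < l ∧ m < j) :
    QSL3.X R q i j * QSL3.X R q l m = QSL3.X R q l m * QSL3.X R q i j := by
  have := RingQuot.mkAlgHom_rel R (QSL3.Rel.comm (R := R) (q := q) i j l m h)
  simp only [map_mul, QSL3.X] at this ⊢; exact this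

theorem X_exch (i j l m : Fin 3) (h : l < i ∧ m < j) :
    QSL3.X R q i j * QSL3.X R q l m
      = QSL3.X R q l m * QSL3.X R q i j
        - ((q : R) - ((q⁻¹ : Rˣ) : R)) • (QSL3.X R q i m * QSL3.X R q l j) := by
  have := RingQuot.mkAlgHom_rel R (QSL3.Rel.exch (R := R) (q := q) i j l m h)
  simp only [map_mul, map_sub, map_smul, QSL3.X] at this ⊢; exact this

/-- Inverted form of `X_q_comm`. -/
theorem X_q_comm' (i j l m : Fin 3) (h : (l < i ∧ j = m) ∨ (i = l ∧ m < j)) :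
    QSL3.X R q l m * QSL3.X R q i j
      = (q : R) • (QSL3.X R q i j * QSL3.X R q l m) := by
  rw [X_q_comm R q i j l m h, smul_smul, ← Units.val_mul, mul_inv_cancel, Units.val_one,
    one_smul]

end AuxRel

/-- If `q` and `q²` are both roots of unity of order `N`, then each
`X_ij^N` is central in `O_q(SL_3)`. -/
theorem X_pow_central (R : Type) [CommRing R] (q : Rˣ) (N : ℕ)
    (hq : QSL3.IsRootOfOrder R (q : R) N)
    (hq2 : QSL3.IsRootOfOrder R ((q : R) ^ 2) N) :
    ∀ i j : Fin 3, ∀ y : QSL3.Oq R q,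
      QSL3.X R q i j ^ N * y = y * QSL3.X R q i j ^ N := by
  classical
  -- basic facts about powers of `q`
  have hu1 : (q : Rˣ) ^ N = 1 := Units.ext (by simpa using hq.1)
  have hu2 : (q ^ 2 : Rˣ) ^ N = 1 := Units.ext (by simpa using hq2.1)
  have hqN : ((q : Rˣ) : R) ^ N = 1 := hq.1
  have hqiN : ((q⁻¹ : Rˣ) : R) ^ N = 1 := by
    rw [← Units.val_pow_eq_pow_val, inv_pow, hu1, inv_one, Units.val_one]
  have hq2N : (((q : Rˣ) : R) ^ 2) ^ N = 1 := hq2.1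
  have hqi2N : (((q⁻¹ : Rˣ) : R) ^ 2) ^ N = 1 := by
    rw [← Units.val_pow_eq_pow_val, ← Units.val_pow_eq_pow_val, inv_pow, inv_pow,
      hu2, inv_one, Units.val_one]
  have hqq : ((q : Rˣ) : R) * ((q⁻¹ : Rˣ) : R) = 1 := by
    rw [← Units.val_mul, mul_inv_cancel, Units.val_one]
  -- geometric sums vanish
  have geom_zero : ∀ μ : R, μ ^ N = 1 → (μ - 1) * ∑ k ∈ Finset.range N, μ ^ k = 0 := by
    intro μ hμ
    rw [mul_comm, geom_sum_mul, hμ, sub_self]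
  intro i j y
  set u : QSL3.Oq R q := QSL3.X R q i j with hu
  -- `u ^ N` commutes with every generator
  have key : ∀ l m : Fin 3, u ^ N * QSL3.X R q l m = QSL3.X R q l m * u ^ N := by
    intro l m
    rcases lt_trichotomy i l with hil | hil | hil <;>
      rcases lt_trichotomy j m with hjm | hjm | hjm
    · -- i < l, j < m : exchange, type B
      refine pow_exch_eq u (QSL3.X R q l m) (QSL3.X R q l j * QSL3.X R q i m)
        (((q : Rˣ) : R) - ((q⁻¹ : Rˣ) : R)) (((q : Rˣ) : R) ^ 2) ?_ ?_ ?_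
      · have h0 := geom_zero (((q : Rˣ) : R) ^ 2) hq2N
        have : ((q : Rˣ) : R) - ((q⁻¹ : Rˣ) : R)
            = ((q⁻¹ : Rˣ) : R) * (((q : Rˣ) : R) ^ 2 - 1) := by
          linear_combination (-((q : Rˣ) : R)) * hqq
        rw [this, mul_assoc, h0, mul_zero]
      · have h := X_exch R q l m i j ⟨hil, hjm⟩
        rw [eq_sub_iff_add_eq] at h
        exact h.symm
      · -- u * (X l j * X i m) = q^2 • ((X l j * X i m) * u)
        have h1 := X_q_comm' R q l j i j (Or.inl ⟨hil, rfl⟩)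
        have h2 := X_q_comm' R q i m i j (Or.inr ⟨rfl, hjm⟩)
        calc u * (QSL3.X R q l j * QSL3.X R q i m)
            = (u * QSL3.X R q l j) * QSL3.X R q i m := by rw [mul_assoc]
          _ = ((q : Rˣ) : R) • ((QSL3.X R q l j * u) * QSL3.X R q i m) := by
              rw [h1, smul_mul_assoc]
          _ = ((q : Rˣ) : R) • (QSL3.X R q l j * (u * QSL3.X R q i m)) := by
              rw [mul_assoc]
          _ = ((q : Rˣ) : R) • (QSL3.X R q l j *
                (((q : Rˣ) : R) • (QSL3.X R q i m * u))) := by rw [h2]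
          _ = (((q : Rˣ) : R) ^ 2) • (QSL3.X R q l j * QSL3.X R q i m * u) := by
              rw [mul_smul_comm, smul_smul, sq, mul_assoc]
    · -- i < l, j = m : `u v = q • (v u)`
      subst hjm
      exact pow_qcomm_eq u _ _ hqN (X_q_comm' R q l j i j (Or.inl ⟨hil, rfl⟩))
    · -- i < l, m < j : commuting
      exact (Commute.pow_left (X_comm R q i j l m ⟨hil, hjm⟩) N).eq
    · -- i = l, j < m : `u v = q • (v u)`
      subst hil
      exact pow_qcomm_eq u _ _ hqN (X_q_comm' R q i m i j (Or.inr ⟨rfl, hjm⟩))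
    · -- i = l, j = m
      subst hil; subst hjm
      exact (Commute.pow_left rfl N).eq
    · -- i = l, m < j : `u v = q⁻¹ • (v u)`
      subst hil
      exact pow_qcomm_eq u _ _ hqiN (X_q_comm R q i j i m (Or.inr ⟨rfl, hjm⟩))
    · -- l < i, j < m : commuting
      exact (Commute.pow_left (X_comm R q l m i j ⟨hil, hjm⟩).symm N).eq
    · -- l < i, j = m : `u v = q⁻¹ • (v u)`
      subst hjm
      exact pow_qcomm_eq u _ _ hqiN (X_q_comm R q i j l j (Or.inl ⟨hil, rfl⟩))
    · -- l < i, m < j : exchange, type A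
      refine pow_exch_eq u (QSL3.X R q l m) (QSL3.X R q i m * QSL3.X R q l j)
        (-(((q : Rˣ) : R) - ((q⁻¹ : Rˣ) : R))) (((q⁻¹ : Rˣ) : R) ^ 2) ?_ ?_ ?_
      · have h0 := geom_zero (((q⁻¹ : Rˣ) : R) ^ 2) hqi2N
        have : -(((q : Rˣ) : R) - ((q⁻¹ : Rˣ) : R))
            = ((q : Rˣ) : R) * (((q⁻¹ : Rˣ) : R) ^ 2 - 1) := by
          linear_combination (-((q⁻¹ : Rˣ) : R)) * hqq
        rw [this, mul_assoc, h0, mul_zero]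
      · have h := X_exch R q i j l m ⟨hil, hjm⟩
        rw [h, neg_smul, sub_eq_add_neg]
      · have h1 := X_q_comm R q i j i m (Or.inr ⟨rfl, hjm⟩)
        have h2 := X_q_comm R q i j l j (Or.inl ⟨hil, rfl⟩)
        calc u * (QSL3.X R q i m * QSL3.X R q l j)
            = (u * QSL3.X R q i m) * QSL3.X R q l j := by rw [mul_assoc]
          _ = ((q⁻¹ : Rˣ) : R) • (QSL3.X R q i m * (u * QSL3.X R q l j)) := by
              rw [h1, smul_mul_assoc, mul_assoc]
          _ = ((q⁻¹ : Rˣ) : R) • (QSL3.X R q i m *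
                (((q⁻¹ : Rˣ) : R) • (QSL3.X R q l j * u))) := by rw [h2]
          _ = (((q⁻¹ : Rˣ) : R) ^ 2) • (QSL3.X R q i m * QSL3.X R q l j * u) := by
              rw [mul_smul_comm, smul_smul, sq, mul_assoc]
  -- extend to all of `O_q(SL_3)`
  obtain ⟨x, rfl⟩ := RingQuot.mkAlgHom_surjective R (QSL3.Rel R q) y
  induction x using FreeAlgebra.induction with
  | grade0 r =>
      rw [AlgHom.commutes]
      exact (Algebra.commutes r (u ^ N)).symm
  | grade1 p =>
      have : RingQuot.mkAlgHom R (QSL3.Rel R q) (FreeAlgebra.ι R p)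
          = QSL3.X R q p.1 p.2 := rfl
      rw [this]; exact key p.1 p.2
  | mul a b ha hb =>
      rw [map_mul]; exact ((show Commute (u ^ N) (RingQuot.mkAlgHom R (QSL3.Rel R q) a : QSL3.Oq R q) from ha).mul_right (show Commute (u ^ N) (RingQuot.mkAlgHom R (QSL3.Rel R q) b : QSL3.Oq R q) from hb)).eq
  | add a b ha hb =>
      rw [map_add]; exact ((show Commute (u ^ N) (RingQuot.mkAlgHom R (QSL3.Rel R q) a : QSL3.Oq R q) from ha).add_right (show Commute (u ^ N) (RingQuot.mkAlgHom R (QSL3.Rel R q) b : QSL3.Oq R q) from hb)).eq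


end
end

section
/- Let R be a commutative ring and let A be a 3×3 matrix over R with det A = 1. Then for every N ≥ 0, P^(N)(trace A, trace(adjugate A)) = trace(A^N), where P^(N) is evaluated at the pair (trace A, trace(adjugate A)) by substituting these commuting elements of R for x and y. -/
noncomputable section

/-- The ideal generated by `λ1 λ2 λ3 − 1`. -/
def lamIdeal : Ideal (MvPolynomial (Fin 3) ℤ) :=
  Ideal.span {MvPolynomial.X 0 * MvPolynomial.X 1 * MvPolynomial.X 2 - 1}

/-- The ring `Λ = ℤ[λ1, λ2, λ3]/(λ1 λ2 λ3 − 1)`. -/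
def Lam : Type := MvPolynomial (Fin 3) ℤ ⧸ lamIdeal

instance : CommRing Lam :=
  inferInstanceAs (CommRing (MvPolynomial (Fin 3) ℤ ⧸ lamIdeal))

/-- The image of the variable `λ i` in `Λ`. -/
def lam (i : Fin 3) : Lam :=
  Ideal.Quotient.mk lamIdeal (MvPolynomial.X i)

/-- The first elementary symmetric polynomial `E1 = λ1 + λ2 + λ3` in `Λ`. -/
def E1 : Lam := lam 0 + lam 1 + lam 2

/-- The second elementary symmetric polynomial `E2 = λ1λ2 + λ1λ3 + λ2λ3` in `Λ`. -/
def E2 : Lam := lam 0 * lam 1 + lam 0 * lam 2 + lam 1 * lam 2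

lemma evalP_eq_eval₂ {R : Type*} [CommRing R] (p : MvPolynomial (Fin 2) ℤ) (u v : R) :
    evalP p u v = MvPolynomial.eval₂ (Int.castRingHom R) ![u, v] p := by
  unfold evalP MvPolynomial.eval₂
  refine Finsupp.sum_congr fun m _ => ?_
  rw [Finsupp.prod_pow]
  simp [Fin.prod_univ_two, zsmul_eq_mul]

/-- For a 3×3 matrix `A` over a commutative ring with `det A = 1`,
`P^(N)(trace A, trace (adjugate A)) = trace (A^N)` for every `N ≥ 0`. -/
theorem powerSum_trace (R : Type) [CommRing R] (A : Matrix (Fin 3) (Fin 3) R)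
    (hA : A.det = 1) (N : ℕ) :
    evalP (powerSum N) A.trace A.adjugate.trace = (A ^ N).trace := by
  set t := A.trace with ht
  set s := A.adjugate.trace with hs
  have he : ∀ p : MvPolynomial (Fin 2) ℤ, evalP p t s
      = MvPolynomial.eval₂Hom (Int.castRingHom R) ![t, s] p := fun p => evalP_eq_eval₂ p t s
  set e : MvPolynomial (Fin 2) ℤ →+* R := MvPolynomial.eval₂Hom (Int.castRingHom R) ![t, s]
    with hedef
  have heX0 : e (MvPolynomial.X 0) = t := by simp [hedef]
  have heX1 : e (MvPolynomial.X 1) = s := by simp [hedef]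
  -- Cayley–Hamilton for 3×3 with det = 1
  have CH : A ^ 3 = t • A ^ 2 - s • A + 1 := by
    have hd := A.det_fin_three
    rw [hA] at hd
    ext i j
    simp only [pow_succ, pow_zero, one_mul, Matrix.sub_apply, Matrix.add_apply,
      Matrix.smul_apply, Matrix.mul_apply, Fin.sum_univ_three, ht, hs,
      Matrix.trace_fin_three, Matrix.adjugate_fin_three, Matrix.one_apply,
      Matrix.of_apply, Matrix.cons_val', Matrix.cons_val_zero, Matrix.cons_val_one,
      Matrix.head_cons, Matrix.empty_val', Matrix.cons_val_fin_one, Matrix.head_fin_const,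
      smul_eq_mul]
    fin_cases i <;> fin_cases j <;> simp <;>
      first
      | linear_combination -hd
      | linear_combination hd
      | linear_combination -2 * hd
      | linear_combination 2 * hd
      | ring
  have trRec : ∀ n : ℕ, (A ^ (n + 3)).trace
      = t * (A ^ (n + 2)).trace - s * (A ^ (n + 1)).trace + (A ^ n).trace := by
    intro n
    have : A ^ (n + 3) = t • A ^ (n + 2) - s • A ^ (n + 1) + A ^ n := by
      rw [pow_add, CH, mul_add, mul_sub, mul_smul_comm, mul_smul_comm, mul_one,
        ← pow_add, ← pow_succ]
    rw [this]
    simp [Matrix.trace_add, Matrix.trace_sub, Matrix.trace_smul, smul_eq_mul]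
  -- base case N = 2
  have base2 : (A ^ 2).trace = t * t - 2 * s := by
    simp only [pow_two, ht, hs, Matrix.trace_fin_three, Matrix.adjugate_fin_three,
      Matrix.mul_apply, Fin.sum_univ_three, Matrix.of_apply, Matrix.cons_val',
      Matrix.cons_val_zero, Matrix.cons_val_one, Matrix.head_cons, Matrix.empty_val',
      Matrix.cons_val_fin_one, Matrix.head_fin_const, Matrix.cons_val_two, Matrix.tail_cons]
    ring
  -- three-step induction
  have key : ∀ n : ℕ,
      evalP (powerSum n) t s = (A ^ n).trace ∧
      evalP (powerSum (n + 1)) t s = (A ^ (n + 1)).trace ∧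
      evalP (powerSum (n + 2)) t s = (A ^ (n + 2)).trace := by
    intro n
    induction n with
    | zero =>
      refine ⟨?_, ?_, ?_⟩
      · rw [he]; show e (powerSum 0) = _
        rw [pow_zero]
        show e 3 = _
        rw [map_ofNat]
        simp [Matrix.trace_one]
      · rw [he]; show e (powerSum 1) = _
        simp [powerSum, heX0, ht]
      · rw [he]; show e (powerSum 2) = _
        simp only [powerSum, map_sub, map_mul, map_pow, heX0, heX1, map_ofNat]
        rw [base2]; ring
    | succ k ih =>
      refine ⟨ih.2.1, ih.2.2, ?_⟩
      have hp : powerSum (k + 3) = MvPolynomial.X 0 * powerSum (k+2)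
          - MvPolynomial.X 1 * powerSum (k+1) + powerSum k := rfl
      rw [he, hp]
      simp only [map_add, map_sub, map_mul, heX0, heX1]
      rw [← he, ← he, ← he, ih.1, ih.2.1, ih.2.2, trRec k]
  exact (key N).1

end
end
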